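/- For each t ∈ K with t ≠ 0, the algebra Λ(t) defined by the tetrahedral quiver with deformation parameter tλ in place of λ is isomorphic to Λ(1) = Λ(m,λ); explicitly, choosing a_t ∈ K with a_t^{3(m−1)} = t, the map sending each arrow θ to a_t·θ extends to an algebra isomorphism Λ(1) → Λ(t). Consequently Λ(m,λ) degenerates to Λ(m,0) in the variety of 36m-dimensional algebras. -/

import Mathlib

open scoped TensorProduct

namespace HigherTetrahedral

/-- The twelve arrows of the tetrahedral triangulation quiver. -/
inductive Arr : Type
  | nu | de | ep | rh | si | al | ga | be | xi | et | om | mu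
  deriving DecidableEq

open Arr

instance : Fintype Arr :=
  ⟨⟨{nu, de, ep, rh, si, al, ga, be, xi, et, om, mu}, by decide⟩, fun x => by cases x <;> decide⟩

/-- Source vertex of each arrow (vertex `v` is `⟨v-1⟩ : Fin 6`). -/
def src : Arr → Fin 6
  | nu => 0 | de => 0 | ep => 1 | rh => 1 | si => 2 | al => 2
  | ga => 3 | be => 3 | xi => 4 | et => 4 | om => 5 | mu => 5

/-- Target vertex of each arrow. -/
def tgt : Arr → Fin 6
  | nu => 5 | de => 4 | ep => 4 | rh => 5 | si => 1 | al => 0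
  | ga => 0 | be => 1 | xi => 2 | et => 3 | om => 3 | mu => 2

/-- The permutation `f` of arrows, with orbits (δ η γ), (ε ξ σ), (ρ ω β), (ν μ α). -/
def f : Arr → Arr
  | de => et | et => ga | ga => de
  | ep => xi | xi => si | si => ep
  | rh => om | om => be | be => rh
  | nu => mu | mu => al | al => nu

/-- The permutation `g`: `g θ` is the arrow starting at `tgt θ` other than `f θ`. -/
def g : Arr → Arr
  | de => xi | et => be | ga => nu
  | ep => et | xi => al | si => rh
  | rh => mu | om => ga | be => ep
  | nu => om | mu => si | al => de

variable (K : Type) [Field K]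

/-- The ambient free algebra on the vertices and arrows. -/
abbrev FreeTet := FreeAlgebra K ((Fin 6) ⊕ Arr)

/-- Generator corresponding to a vertex. -/
def V (i : Fin 6) : FreeTet K := FreeAlgebra.ι K (Sum.inl i)

/-- Generator corresponding to an arrow. -/
def A (θ : Arr) : FreeTet K := FreeAlgebra.ι K (Sum.inr θ)

variable (m : ℕ) (lam : K)

/-- The defining relations of the higher tetrahedral algebra `Λ(m,λ)`, together with
the path-algebra relations for the vertex idempotents. -/
inductive TetRel : FreeTet K → FreeTet K → Prop
  | idem (i j : Fin 6) : TetRel (V K i * V K j) (if i = j then V K i else 0)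
  | sum_one : TetRel (∑ i : Fin 6, V K i) 1
  | src_tgt (θ : Arr) : TetRel (V K (src θ) * A K θ * V K (tgt θ)) (A K θ)
  | rel_ga : TetRel (A K ga * A K de)
      (A K be * A K ep + lam • ((A K be * A K rh * A K om) ^ (m - 1) * (A K be * A K ep)))
  | rel_rh : TetRel (A K rh * A K om)
      (A K ep * A K et + lam • ((A K ep * A K xi * A K si) ^ (m - 1) * (A K ep * A K et)))
  | rel_xi : TetRel (A K xi * A K si)
      (A K et * A K be + lam • ((A K et * A K ga * A K de) ^ (m - 1) * (A K et * A K be)))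
  | rel_de : TetRel (A K de * A K et) (A K nu * A K om)
  | rel_om : TetRel (A K om * A K be) (A K mu * A K si)
  | rel_si : TetRel (A K si * A K ep) (A K al * A K de)
  | rel_et : TetRel (A K et * A K ga) (A K xi * A K al)
  | rel_be : TetRel (A K be * A K rh) (A K ga * A K nu)
  | rel_ep : TetRel (A K ep * A K xi) (A K rh * A K mu)
  | rel_nu : TetRel (A K nu * A K mu) (A K de * A K xi)
  | rel_mu : TetRel (A K mu * A K al) (A K om * A K ga)
  | rel_al : TetRel (A K al * A K nu) (A K si * A K rh)
  | zero_rel (θ : Arr) : TetRel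
      ((A K θ * A K (f θ) * A K (f (f θ))) ^ (m - 1) * (A K θ * A K (f θ)) * A K (g (f θ))) 0

/-- The higher tetrahedral algebra `Λ(m,λ)`. -/
abbrev Tet := RingQuot (TetRel K m lam)

/-- The idempotent of `Λ(m,λ)` at a vertex. -/
def e (i : Fin 6) : Tet K m lam := RingQuot.mkAlgHom K (TetRel K m lam) (V K i)

/-- The image in `Λ(m,λ)` of an arrow. -/
def a (θ : Arr) : Tet K m lam := RingQuot.mkAlgHom K (TetRel K m lam) (A K θ)

/-- The elements `X_i` (vertex `i+1` in the paper's numbering):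
`X₁ = δηγ`, `X₂ = ρωβ`, `X₃ = ανμ`, `X₄ = γδη`, `X₅ = ηγδ`, `X₆ = ωβρ`. -/
def X : Fin 6 → Tet K m lam
  | 0 => a K m lam de * a K m lam et * a K m lam ga
  | 1 => a K m lam rh * a K m lam om * a K m lam be
  | 2 => a K m lam al * a K m lam nu * a K m lam mu
  | 3 => a K m lam ga * a K m lam de * a K m lam et
  | 4 => a K m lam et * a K m lam ga * a K m lam de
  | 5 => a K m lam om * a K m lam be * a K m lam rh

/-- Product in `Λ(m,λ)` of a list of arrows (a path, read left to right). -/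
def pathProd (l : List Arr) : Tet K m lam := (l.map (a K m lam)).prod

/-- `IsPath i j l` : the list of arrows `l` is a (composable) path from vertex `i`
to vertex `j`. -/
def IsPath (i j : Fin 6) (l : List Arr) : Prop :=
  l ≠ [] ∧ l.Chain' (fun x y => tgt x = src y) ∧
    (∀ h : l ≠ [], src (l.head h) = i ∧ tgt (l.getLast h) = j)

end HigherTetrahedral


namespace HigherTetrahedral
open Arr

variable (K : Type) [Field K] (m : ℕ)

/-- Generators for the scaling homomorphism. -/
def gen (u μ : K) : (Fin 6 ⊕ Arr) → Tet K m μ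
  | .inl i => e K m μ i
  | .inr θ => u • a K m μ θ

/-- The scaling homomorphism on the free algebra. -/
def phi0 (u μ : K) : FreeTet K →ₐ[K] Tet K m μ :=
  FreeAlgebra.lift K (gen K m u μ)

@[simp] lemma phi0_V (u μ : K) (i : Fin 6) : phi0 K m u μ (V K i) = e K m μ i := by
  simp [phi0, V, gen]

@[simp] lemma phi0_A (u μ : K) (θ : Arr) : phi0 K m u μ (A K θ) = u • a K m μ θ := by
  simp [phi0, A, gen]

section target
variable (ν : K)

lemma e_mul (i j : Fin 6) :
    e K m ν i * e K m ν j = if i = j then e K m ν i else 0 := by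
  have h2 := RingQuot.mkAlgHom_rel K (TetRel.idem (K := K) (m := m) (lam := ν) i j)
  simpa [e, apply_ite (RingQuot.mkAlgHom K (TetRel K m ν))] using h2

lemma e_sum : ∑ i, e K m ν i = 1 := by
  have h2 := RingQuot.mkAlgHom_rel K (TetRel.sum_one (K := K) (m := m) (lam := ν))
  simpa [e] using h2

lemma e_a_e (θ : Arr) :
    e K m ν (src θ) * a K m ν θ * e K m ν (tgt θ) = a K m ν θ := by
  simpa [e, a] using RingQuot.mkAlgHom_rel K (TetRel.src_tgt (K := K) (m := m) (lam := ν) θ)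

lemma rel_ga' : a K m ν ga * a K m ν de = a K m ν be * a K m ν ep +
    ν • ((a K m ν be * a K m ν rh * a K m ν om) ^ (m - 1) *
      (a K m ν be * a K m ν ep)) := by
  simpa [a] using RingQuot.mkAlgHom_rel K (TetRel.rel_ga (K := K) (m := m) (lam := ν))

lemma rel_rh' : a K m ν rh * a K m ν om = a K m ν ep * a K m ν et +
    ν • ((a K m ν ep * a K m ν xi * a K m ν si) ^ (m - 1) *
      (a K m ν ep * a K m ν et)) := by
  simpa [a] using RingQuot.mkAlgHom_rel K (TetRel.rel_rh (K := K) (m := m) (lam := ν))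

lemma rel_xi' : a K m ν xi * a K m ν si = a K m ν et * a K m ν be +
    ν • ((a K m ν et * a K m ν ga * a K m ν de) ^ (m - 1) *
      (a K m ν et * a K m ν be)) := by
  simpa [a] using RingQuot.mkAlgHom_rel K (TetRel.rel_xi (K := K) (m := m) (lam := ν))

lemma comm' {x y z w : Arr} (r : TetRel K m ν (A K x * A K y) (A K z * A K w)) :
    a K m ν x * a K m ν y = a K m ν z * a K m ν w := by
  simpa [a] using RingQuot.mkAlgHom_rel K r

lemma zero' (θ : Arr) :
    (a K m ν θ * a K m ν (f θ) * a K m ν (f (f θ))) ^ (m - 1) *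
      (a K m ν θ * a K m ν (f θ)) * a K m ν (g (f θ)) = 0 := by
  simpa [a] using RingQuot.mkAlgHom_rel K (TetRel.zero_rel (K := K) (m := m) (lam := ν) θ)

end target

lemma hrel (u μ ν : K) (h : ν = u ^ (3 * (m - 1)) * μ) :
    ∀ ⦃x y : FreeTet K⦄, TetRel K m μ x y → phi0 K m u ν x = phi0 K m u ν y := by
  intro x y r
  cases r with
  | idem i j =>
      simp only [map_mul, phi0_V, apply_ite (phi0 K m u ν), map_zero]
      exact e_mul K m ν i j
  | sum_one =>
      simp only [map_sum, phi0_V, map_one]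
      exact e_sum K m ν
  | src_tgt θ =>
      simp only [map_mul, phi0_V, phi0_A, smul_mul_assoc, mul_smul_comm]
      rw [e_a_e K m ν θ]
  | rel_ga =>
      simp only [map_mul, map_add, map_smul, map_pow, phi0_A, smul_mul_assoc,
        mul_smul_comm, smul_pow, smul_smul]
      rw [rel_ga' K m ν, smul_add, smul_smul]
      congr 2
      subst h; ring
  | rel_rh =>
      simp only [map_mul, map_add, map_smul, map_pow, phi0_A, smul_mul_assoc,
        mul_smul_comm, smul_pow, smul_smul]
      rw [rel_rh' K m ν, smul_add, smul_smul]
      congr 2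
      subst h; ring
  | rel_xi =>
      simp only [map_mul, map_add, map_smul, map_pow, phi0_A, smul_mul_assoc,
        mul_smul_comm, smul_pow, smul_smul]
      rw [rel_xi' K m ν, smul_add, smul_smul]
      congr 2
      subst h; ring
  | rel_de =>
      simp only [map_mul, phi0_A, smul_mul_assoc, mul_smul_comm, smul_smul]
      rw [comm' K m ν (TetRel.rel_de (K := K) (m := m) (lam := ν))]
  | rel_om =>
      simp only [map_mul, phi0_A, smul_mul_assoc, mul_smul_comm, smul_smul]
      rw [comm' K m ν (TetRel.rel_om (K := K) (m := m) (lam := ν))]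
  | rel_si =>
      simp only [map_mul, phi0_A, smul_mul_assoc, mul_smul_comm, smul_smul]
      rw [comm' K m ν (TetRel.rel_si (K := K) (m := m) (lam := ν))]
  | rel_et =>
      simp only [map_mul, phi0_A, smul_mul_assoc, mul_smul_comm, smul_smul]
      rw [comm' K m ν (TetRel.rel_et (K := K) (m := m) (lam := ν))]
  | rel_be =>
      simp only [map_mul, phi0_A, smul_mul_assoc, mul_smul_comm, smul_smul]
      rw [comm' K m ν (TetRel.rel_be (K := K) (m := m) (lam := ν))]
  | rel_ep =>
      simp only [map_mul, phi0_A, smul_mul_assoc, mul_smul_comm, smul_smul]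
      rw [comm' K m ν (TetRel.rel_ep (K := K) (m := m) (lam := ν))]
  | rel_nu =>
      simp only [map_mul, phi0_A, smul_mul_assoc, mul_smul_comm, smul_smul]
      rw [comm' K m ν (TetRel.rel_nu (K := K) (m := m) (lam := ν))]
  | rel_mu =>
      simp only [map_mul, phi0_A, smul_mul_assoc, mul_smul_comm, smul_smul]
      rw [comm' K m ν (TetRel.rel_mu (K := K) (m := m) (lam := ν))]
  | rel_al =>
      simp only [map_mul, phi0_A, smul_mul_assoc, mul_smul_comm, smul_smul]
      rw [comm' K m ν (TetRel.rel_al (K := K) (m := m) (lam := ν))]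
  | zero_rel θ =>
      simp only [map_mul, map_pow, phi0_A, map_zero, smul_mul_assoc,
        mul_smul_comm, smul_pow, smul_smul]
      rw [zero' K m ν θ, smul_zero]

/-- The scaling algebra homomorphism between the deformed tetrahedral algebras. -/
def phh (u μ ν : K) (h : ν = u ^ (3 * (m - 1)) * μ) :
    Tet K m μ →ₐ[K] Tet K m ν :=
  RingQuot.liftAlgHom K ⟨phi0 K m u ν, hrel K m u μ ν h⟩

@[simp] lemma phh_e (u μ ν : K) (h : ν = u ^ (3 * (m - 1)) * μ) (i : Fin 6) :
    phh K m u μ ν h (e K m μ i) = e K m ν i := by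
  simp [phh, e, RingQuot.liftAlgHom_mkAlgHom_apply]

@[simp] lemma phh_a (u μ ν : K) (h : ν = u ^ (3 * (m - 1)) * μ) (θ : Arr) :
    phh K m u μ ν h (a K m μ θ) = u • a K m ν θ := by
  simp [phh, a, RingQuot.liftAlgHom_mkAlgHom_apply]

lemma algHom_ext {B : Type} [Semiring B] [Algebra K B] {μ : K}
    (F G : Tet K m μ →ₐ[K] B)
    (he : ∀ i, F (e K m μ i) = G (e K m μ i))
    (ha : ∀ θ, F (a K m μ θ) = G (a K m μ θ)) : F = G := by
  apply RingQuot.ringQuot_ext'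
  apply FreeAlgebra.hom_ext
  funext x
  cases x with
  | inl i => exact he i
  | inr θ => exact ha θ

end HigherTetrahedral


open HigherTetrahedral Arr in
/-- For `t ≠ 0` the algebra `Λ(t)` (with deformation parameter `tλ`) is isomorphic
to `Λ(1) = Λ(m,λ)`: choosing `a_t` with `a_t^(3(m−1)) = t`, sending each arrow `θ` to
`a_t·θ` (and fixing the vertex idempotents) yields an algebra isomorphism
`Λ(1) → Λ(t)`. -/
theorem tet_deformation_iso (K : Type) [Field K] (m : ℕ) (hm : 2 ≤ m) (lam : K)
    (hlam : lam ≠ 0) (t : K) (ht : t ≠ 0) (c : K) (hc : c ^ (3 * (m - 1)) = t) :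
    ∃ φ : Tet K m lam ≃ₐ[K] Tet K m (t * lam),
      (∀ i : Fin 6, φ (e K m lam i) = e K m (t * lam) i) ∧
      (∀ θ : Arr, φ (a K m lam θ) = c • a K m (t * lam) θ) := by
  have hm1 : 3 * (m - 1) ≠ 0 := by omega
  have hcne : c ≠ 0 := by
    intro h0
    exact ht (by rw [← hc, h0, zero_pow hm1])
  have h1 : t * lam = c ^ (3 * (m - 1)) * lam := by rw [hc]
  have h2 : lam = c⁻¹ ^ (3 * (m - 1)) * (t * lam) := by
    rw [inv_pow, hc]
    field_simp
  refine ⟨AlgEquiv.ofAlgHom (phh K m c lam (t * lam) h1)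
      (phh K m c⁻¹ (t * lam) lam h2) ?_ ?_, ?_, ?_⟩
  · apply algHom_ext
    · intro i; simp
    · intro θ
      simp [smul_smul, mul_inv_cancel₀ hcne, inv_mul_cancel₀ hcne]
  · apply algHom_ext
    · intro i; simp
    · intro θ
      simp [smul_smul, inv_mul_cancel₀ hcne, mul_inv_cancel₀ hcne]
  · intro i; exact phh_e K m c lam (t * lam) h1 i
  · intro θ; exact phh_a K m c lam (t * lam) h1 θ
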